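/- arXiv:2503.00773 — 3 statements merged into one kernel-verified Lean document; each statement's English description precedes it below -/
import Mathlib

section
/- Let G be a finite abelian p-group, H̃_2(G) = (G⊗G)/⟨g⊗h+h⊗g⟩, and HC_1 = (G ⊗_Z Z_p[G])/⟨g ⊗ λg⟩. Define ω₂: HC_1 → H̃_2(G) on generators by ω₂(g ⊗ λh) = λ̄·(g ⊗̃ g^{-1}h), where λ̄ is the reduction of λ ∈ Z_p modulo the exponent of G. Then ω₂ is a well-defined surjective group homomorphism. -/
open TensorProduct

/-- `H̃₂(G) = (G ⊗_ℤ G)/⟨g⊗h + h⊗g⟩`. -/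
def Htilde2 (G : Type) [CommGroup G] : Type :=
  (Additive G ⊗[ℤ] Additive G) ⧸
    AddSubgroup.closure
      {x : Additive G ⊗[ℤ] Additive G |
        ∃ a b : G,
          x = Additive.ofMul a ⊗ₜ[ℤ] Additive.ofMul b
                + Additive.ofMul b ⊗ₜ[ℤ] Additive.ofMul a}

noncomputable instance (G : Type) [CommGroup G] : AddCommGroup (Htilde2 G) :=
  inferInstanceAs (AddCommGroup ((Additive G ⊗[ℤ] Additive G) ⧸ _))

/-- `HC₁(ℤ_p[G]) = (G ⊗_ℤ ℤ_p[G]) / ⟨g ⊗ λg : g ∈ G, λ ∈ ℤ_p⟩`. -/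
def HC1 (p : ℕ) [Fact p.Prime] (G : Type) [CommGroup G] : Type :=
  (Additive G ⊗[ℤ] MonoidAlgebra ℤ_[p] G) ⧸
    AddSubgroup.closure
      {x : Additive G ⊗[ℤ] MonoidAlgebra ℤ_[p] G |
        ∃ (g : G) (l : ℤ_[p]), x = Additive.ofMul g ⊗ₜ[ℤ] (l • MonoidAlgebra.of ℤ_[p] G g)}

noncomputable instance (p : ℕ) [Fact p.Prime] (G : Type) [CommGroup G] : AddCommGroup (HC1 p G) :=
  inferInstanceAs (AddCommGroup ((Additive G ⊗[ℤ] MonoidAlgebra ℤ_[p] G) ⧸ _))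



section smul
variable {M : Type} [AddCommGroup M] {e : ℕ}

lemma mod_smul' (h : ∀ x : M, e • x = 0) (n : ℕ) (x : M) : (n % e) • x = n • x := by
  conv_rhs => rw [← Nat.mod_add_div n e]
  rw [add_nsmul, mul_comm, mul_smul, h, smul_zero, add_zero]

def valSmulHom [NeZero e] (h : ∀ x : M, e • x = 0) (x : M) : ZMod e →+ M where
  toFun z := z.val • x
  map_zero' := by simp
  map_add' a b := by
    show (a+b).val • x = a.val • x + b.val • x
    rw [ZMod.val_add, mod_smul' h, add_nsmul]

lemma valSmulHom_apply [NeZero e] (h : ∀ x : M, e • x = 0) (x : M) (z : ZMod e) :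
    valSmulHom h x z = z.val • x := rfl

lemma val_one_smul [NeZero e] (h : ∀ x : M, e • x = 0) (x : M) :
    (1 : ZMod e).val • x = x := by
  rw [← Nat.cast_one, ZMod.val_natCast, mod_smul' h, one_smul]
end smul

section pi
variable (G : Type) [CommGroup G]

noncomputable def piH : (Additive G ⊗[ℤ] Additive G) →+ Htilde2 G := QuotientAddGroup.mk' _

lemma exp_smul_tensor (x : Additive G ⊗[ℤ] Additive G) : Monoid.exponent G • x = 0 := by
  induction x using TensorProduct.induction_on with
  | zero => simp
  | tmul a b =>
      rw [smul_tmul']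
      have ha : Monoid.exponent G • a = 0 := by
        show Monoid.exponent G • Additive.ofMul a.toMul = 0
        rw [← ofMul_pow, Monoid.pow_exponent_eq_one, ofMul_one]
      rw [ha, zero_tmul]
  | add x y hx hy => rw [smul_add, hx, hy, add_zero]

lemma exp_smul_quot (y : Htilde2 G) : Monoid.exponent G • y = 0 := by
  obtain ⟨x, rfl⟩ := QuotientAddGroup.mk'_surjective _ y
  have : (QuotientAddGroup.mk' _ x : Htilde2 G) = piH G x := rfl
  rw [this, ← map_nsmul, exp_smul_tensor, map_zero]
end pi

section dmap
variable (G : Type) [CommGroup G]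

noncomputable def dmap (a : Additive G) (h : G) : Htilde2 G :=
  piH G (a ⊗ₜ[ℤ] Additive.ofMul h) - piH G (a ⊗ₜ[ℤ] a)

lemma rel_zero (a b : Additive G) :
    piH G (a ⊗ₜ[ℤ] b + b ⊗ₜ[ℤ] a) = 0 := by
  have : piH G (a ⊗ₜ[ℤ] b + b ⊗ₜ[ℤ] a)
      = (QuotientAddGroup.mk (a ⊗ₜ[ℤ] b + b ⊗ₜ[ℤ] a) : Htilde2 G) := rfl
  rw [this]; apply (QuotientAddGroup.eq_zero_iff _).mpr
  exact AddSubgroup.subset_closure ⟨a.toMul, b.toMul, rfl⟩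

lemma dmap_add (a b : Additive G) (h : G) :
    dmap G (a + b) h = dmap G a h + dmap G b h := by
  have key : (a + b) ⊗ₜ[ℤ] Additive.ofMul h - (a + b) ⊗ₜ[ℤ] (a + b)
      = ((a ⊗ₜ[ℤ] Additive.ofMul h - a ⊗ₜ[ℤ] a) + (b ⊗ₜ[ℤ] Additive.ofMul h - b ⊗ₜ[ℤ] b))
        - (a ⊗ₜ[ℤ] b + b ⊗ₜ[ℤ] a) := by
    simp only [add_tmul, tmul_add]; abel
  have : dmap G (a + b) h = piH G (((a ⊗ₜ[ℤ] Additive.ofMul h - a ⊗ₜ[ℤ] a)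
      + (b ⊗ₜ[ℤ] Additive.ofMul h - b ⊗ₜ[ℤ] b)) - (a ⊗ₜ[ℤ] b + b ⊗ₜ[ℤ] a)) := by
    rw [← key, map_sub]; rfl
  rw [this, map_sub, rel_zero, sub_zero, map_add, map_sub, map_sub]; rfl

lemma dmap_eq (g h : G) : dmap G (Additive.ofMul g) h
    = piH G (Additive.ofMul g ⊗ₜ[ℤ] Additive.ofMul (g⁻¹ * h)) := by
  rw [dmap, ofMul_mul, ofMul_inv, tmul_add, tmul_neg, map_add, map_neg]
  abel

lemma dmap_sq (a : Additive G) : dmap G a (a.toMul * a.toMul) = piH G (a ⊗ₜ[ℤ] a) := by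
  have : Additive.ofMul (a.toMul * a.toMul) = a + a := rfl
  rw [dmap, this, tmul_add, map_add]
  abel
end dmap

section f
variable (p : ℕ) [Fact p.Prime] (G : Type) [CommGroup G] (k : ℕ) [NeZero (p ^ k)]

noncomputable def fHom (htor : ∀ y : Htilde2 G, p ^ k • y = 0) :
    Additive G →+ (MonoidAlgebra ℤ_[p] G →+ Htilde2 G) where
  toFun a := (Finsupp.liftAddHom fun h =>
    (valSmulHom htor (dmap G a h)).comp (PadicInt.toZModPow k).toAddMonoidHom).comp
      MonoidAlgebra.coeffAddEquiv.toAddMonoidHom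
  map_zero' := by
    apply MonoidAlgebra.addMonoidHom_ext
    intro h l
    simp only [AddMonoidHom.comp_apply, AddEquiv.coe_toAddMonoidHom,
      MonoidAlgebra.coeffAddEquiv_apply, MonoidAlgebra.coeff_single,
      Finsupp.liftAddHom_apply_single, AddMonoidHom.comp_apply,
      AddMonoidHom.zero_apply, RingHom.toAddMonoidHom_eq_coe, RingHom.coe_coe]
    rw [valSmulHom_apply]
    have : dmap G (0 : Additive G) h = 0 := by
      rw [dmap]
      have h0 : ((0 : Additive G) ⊗ₜ[ℤ] Additive.ofMul h : Additive G ⊗[ℤ] Additive G) = 0 :=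
        zero_tmul _ _
      have h1 : ((0 : Additive G) ⊗ₜ[ℤ] (0 : Additive G) : Additive G ⊗[ℤ] Additive G) = 0 :=
        zero_tmul _ _
      rw [h0, h1, map_zero, sub_zero]
    rw [this, smul_zero]
  map_add' a b := by
    apply MonoidAlgebra.addMonoidHom_ext
    intro h l
    simp only [AddMonoidHom.add_apply, AddMonoidHom.comp_apply, AddEquiv.coe_toAddMonoidHom,
      MonoidAlgebra.coeffAddEquiv_apply, MonoidAlgebra.coeff_single,
      Finsupp.liftAddHom_apply_single, AddMonoidHom.comp_apply,
      AddMonoidHom.add_apply, RingHom.toAddMonoidHom_eq_coe, RingHom.coe_coe]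
    rw [valSmulHom_apply, valSmulHom_apply, valSmulHom_apply, dmap_add, smul_add]

lemma fHom_single (htor : ∀ y : Htilde2 G, p ^ k • y = 0) (a : Additive G) (h : G) (l : ℤ_[p]) :
    fHom p G k htor a (MonoidAlgebra.single h l) = (PadicInt.toZModPow k l).val • dmap G a h := by
  show (Finsupp.liftAddHom _) (Finsupp.single h l) = _
  rw [Finsupp.liftAddHom_apply_single]
  rfl
end f

section phi
variable (p : ℕ) [Fact p.Prime] (G : Type) [CommGroup G] (k : ℕ) [NeZero (p ^ k)]

noncomputable def phiHom (htor : ∀ y : Htilde2 G, p ^ k • y = 0) :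
    (Additive G ⊗[ℤ] MonoidAlgebra ℤ_[p] G) →+ Htilde2 G :=
  TensorProduct.liftAddHom (fHom p G k htor) (by
    intro r m n
    rw [map_zsmul, AddMonoidHom.smul_apply, ← map_zsmul])

lemma phiHom_tmul (htor : ∀ y : Htilde2 G, p ^ k • y = 0) (a : Additive G)
    (F : MonoidAlgebra ℤ_[p] G) :
    phiHom p G k htor (a ⊗ₜ[ℤ] F) = fHom p G k htor a F :=
  TensorProduct.liftAddHom_tmul _ _ _ _
end phi


/-- The map `ω₂ : HC₁(ℤ_p[G]) → H̃₂(G)` defined on generators by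
`ω₂(g ⊗ λh) = λ̄ · (g ⊗̃ g⁻¹h)`, where `λ̄` is the reduction of `λ ∈ ℤ_p` modulo the
exponent of `G`, is a well-defined surjective group homomorphism. -/
theorem stmt8 (p : ℕ) [Fact p.Prime] (G : Type) [CommGroup G] [Fintype G]
    (hG : IsPGroup p G) (k : ℕ) (hexp : Monoid.exponent G = p ^ k) :
    ∃ ω : HC1 p G →+ Htilde2 G,
      Function.Surjective ω ∧
        ∀ (g h : G) (l : ℤ_[p]),
          ω (QuotientAddGroup.mk
              (Additive.ofMul g ⊗ₜ[ℤ] (l • MonoidAlgebra.of ℤ_[p] G h))) =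
            (PadicInt.toZModPow k l).val •
              (QuotientAddGroup.mk (Additive.ofMul g ⊗ₜ[ℤ] Additive.ofMul (g⁻¹ * h)) :
                Htilde2 G) := by
  haveI : NeZero (p ^ k) := ⟨pow_ne_zero k (Fact.out : p.Prime).ne_zero⟩
  have htor : ∀ y : Htilde2 G, p ^ k • y = 0 := by
    intro y; rw [← hexp]; exact exp_smul_quot G y
  have hsingle : ∀ (h : G) (l : ℤ_[p]),
      (l • MonoidAlgebra.of ℤ_[p] G h : MonoidAlgebra ℤ_[p] G) = MonoidAlgebra.single h l := by
    intro h l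
    rw [MonoidAlgebra.of_apply, MonoidAlgebra.smul_single', mul_one]
  have hker : ∀ x ∈ AddSubgroup.closure
      {x : Additive G ⊗[ℤ] MonoidAlgebra ℤ_[p] G |
        ∃ (g : G) (l : ℤ_[p]), x = Additive.ofMul g ⊗ₜ[ℤ] (l • MonoidAlgebra.of ℤ_[p] G g)},
      phiHom p G k htor x = 0 := by
    have : AddSubgroup.closure
        {x : Additive G ⊗[ℤ] MonoidAlgebra ℤ_[p] G |
          ∃ (g : G) (l : ℤ_[p]), x = Additive.ofMul g ⊗ₜ[ℤ] (l • MonoidAlgebra.of ℤ_[p] G g)}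
        ≤ (phiHom p G k htor).ker := by
      rw [AddSubgroup.closure_le]
      rintro x ⟨g, l, rfl⟩
      simp only [SetLike.mem_coe, AddMonoidHom.mem_ker]
      rw [hsingle, phiHom_tmul, fHom_single, dmap, sub_self, smul_zero]
    exact fun x hx => this hx
  refine ⟨QuotientAddGroup.lift _ (phiHom p G k htor) hker, ?_, ?_⟩
  · -- surjectivity
    have hrange : ∀ (a : Additive G) (h : G),
        dmap G a h ∈ (QuotientAddGroup.lift _ (phiHom p G k htor) hker).range := by
      intro a h
      refine ⟨QuotientAddGroup.mk (a ⊗ₜ[ℤ] MonoidAlgebra.single h (1 : ℤ_[p])), ?_⟩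
      erw [QuotientAddGroup.lift_mk]
      rw [phiHom_tmul, fHom_single, map_one, val_one_smul htor]
    have main : ∀ x : Additive G ⊗[ℤ] Additive G,
        piH G x ∈ (QuotientAddGroup.lift _ (phiHom p G k htor) hker).range := by
      intro x
      induction x using TensorProduct.induction_on with
      | zero => rw [map_zero]; exact AddSubgroup.zero_mem _
      | tmul a b =>
          have hb : piH G (a ⊗ₜ[ℤ] b) = dmap G a b.toMul + dmap G a (a.toMul * a.toMul) := by
            rw [dmap_sq]
            have : dmap G a b.toMul = piH G (a ⊗ₜ[ℤ] b) - piH G (a ⊗ₜ[ℤ] a) := rfl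
            rw [this]; abel
          rw [hb]
          exact AddSubgroup.add_mem _ (hrange a b.toMul) (hrange a (a.toMul * a.toMul))
      | add x y hx hy =>
          rw [map_add]; exact AddSubgroup.add_mem _ hx hy
    intro y
    obtain ⟨x, rfl⟩ := QuotientAddGroup.mk'_surjective _ y
    exact main x
  · intro g h l
    rw [hsingle]
    erw [QuotientAddGroup.lift_mk]
    rw [phiHom_tmul, fHom_single, dmap_eq]
    rfl
end

section
/- With G a finite abelian p-group, f: G → Z_p[G] the linearization map f(∏gᵢ^{λᵢ}) = Σλᵢgᵢ, ε₂(g⊗̃h) = g⊗g·f(h) ∈ HC_1(Z_p[G]), and ω₂(g⊗λh) = λ·(g ⊗̃ g^{-1}h) ∈ H̃_2(G), the composition ω₂ ∘ ε₂ is the identity on H̃_2(G); hence ε₂ is a section of ω₂ and the short exact sequence 0 → ker(ω₂) → HC_1(Z_p[G]) → H̃_2(G) → 0 splits. -/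
open TensorProduct

private lemma aux_smul_eq {A : Type} [AddCommGroup A] (m : ℕ) [NeZero m] (c : ℤ) (x : A)
    (hx : (m : ℤ) • x = 0) : ((c : ZMod m).val : ℤ) • x = c • x := by
  have hdvd : (m : ℤ) ∣ (((c : ZMod m).val : ℤ) - c) := by
    rw [← ZMod.intCast_zmod_eq_zero_iff_dvd]
    push_cast
    rw [ZMod.natCast_val, ZMod.cast_id, sub_self]
  obtain ⟨t, ht⟩ := hdvd
  have hsub : ((c : ZMod m).val : ℤ) • x - c • x = (((c : ZMod m).val : ℤ) - c) • x := by
    rw [sub_smul]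
  rw [← sub_eq_zero, hsub, ht, mul_comm, mul_smul, hx, smul_zero]

/-- With `f` the linearization map, `ε₂(g ⊗̃ h) = g ⊗ g·f(h)` and
`ω₂(g ⊗ λh) = λ̄·(g ⊗̃ g⁻¹h)`, the composition `ω₂ ∘ ε₂` is the identity on `H̃₂(G)`;
hence `ε₂` is a section of `ω₂` and the short exact sequence
`0 → ker ω₂ → HC₁(ℤ_p[G]) → H̃₂(G) → 0` splits. -/
theorem stmt9 (p : ℕ) [Fact p.Prime] (G : Type) [CommGroup G] [Fintype G]
    (hG : IsPGroup p G) (k : ℕ) (hexp : Monoid.exponent G = p ^ k)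
    (ι : Type) [Fintype ι] (b : ι → G) (e : G → ι → ℤ)
    (hdecomp : ∀ g : G, g = ∏ i, b i ^ e g i)
    (f : G → MonoidAlgebra ℤ_[p] G)
    (hf : ∀ g : G, f g = ∑ i, e g i • MonoidAlgebra.of ℤ_[p] G (b i))
    (hf1 : f 1 = 0)
    (ε : Htilde2 G →+ HC1 p G)
    (hε : ∀ g h : G,
      ε (QuotientAddGroup.mk (Additive.ofMul g ⊗ₜ[ℤ] Additive.ofMul h)) =
        QuotientAddGroup.mk
          (Additive.ofMul g ⊗ₜ[ℤ] (MonoidAlgebra.of ℤ_[p] G g * f h)))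
    (ω : HC1 p G →+ Htilde2 G)
    (hω : ∀ (g h : G) (l : ℤ_[p]),
      ω (QuotientAddGroup.mk
          (Additive.ofMul g ⊗ₜ[ℤ] (l • MonoidAlgebra.of ℤ_[p] G h))) =
        (PadicInt.toZModPow k l).val •
          (QuotientAddGroup.mk (Additive.ofMul g ⊗ₜ[ℤ] Additive.ofMul (g⁻¹ * h)) :
            Htilde2 G)) :
    ω.comp ε = AddMonoidHom.id (Htilde2 G) ∧ Function.RightInverse ε ω := by
  haveI : NeZero (p ^ k) := ⟨pow_ne_zero k (Fact.out : p.Prime).ne_zero⟩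
  -- torsion: p^k kills every generator of H̃₂
  have htor : ∀ g h : G,
      ((p ^ k : ℕ) : ℤ) • (QuotientAddGroup.mk
        (Additive.ofMul g ⊗ₜ[ℤ] Additive.ofMul h) : Htilde2 G) = 0 := by
    intro g h
    have h1 : ((p ^ k : ℕ) : ℤ) • (Additive.ofMul g ⊗ₜ[ℤ] Additive.ofMul h) =
        Additive.ofMul g ⊗ₜ[ℤ] (((p ^ k : ℕ) : ℤ) • Additive.ofMul h) := by
      rw [TensorProduct.tmul_smul]
    have h2 : (((p ^ k : ℕ) : ℤ) • Additive.ofMul h : Additive G) =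
        Additive.ofMul (h ^ ((p ^ k : ℕ) : ℤ)) := rfl
    have h3 : h ^ ((p ^ k : ℕ) : ℤ) = 1 := by
      rw [zpow_natCast, ← hexp, Monoid.pow_exponent_eq_one]
    have : ((p ^ k : ℕ) : ℤ) • (Additive.ofMul g ⊗ₜ[ℤ] Additive.ofMul h) = 0 := by
      rw [h1, h2, h3]
      show Additive.ofMul g ⊗ₜ[ℤ] (0 : Additive G) = 0
      rw [TensorProduct.tmul_zero]
    show ((QuotientAddGroup.mk' _) (((p ^ k : ℕ) : ℤ) •
      (Additive.ofMul g ⊗ₜ[ℤ] Additive.ofMul h)) : Htilde2 G) = 0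
    rw [this, map_zero]
  have key : ∀ g h : G,
      ω (ε (QuotientAddGroup.mk (Additive.ofMul g ⊗ₜ[ℤ] Additive.ofMul h))) =
      QuotientAddGroup.mk (Additive.ofMul g ⊗ₜ[ℤ] Additive.ofMul h) := by
    intro g h
    rw [hε, hf h, Finset.mul_sum]
    have step : ∀ i, MonoidAlgebra.of ℤ_[p] G g * (e h i • MonoidAlgebra.of ℤ_[p] G (b i))
        = ((e h i : ℤ) : ℤ_[p]) • MonoidAlgebra.of ℤ_[p] G (g * b i) := by
      intro i
      rw [mul_smul_comm, ← map_mul, Int.cast_smul_eq_zsmul]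
    simp only [step, TensorProduct.tmul_sum, QuotientAddGroup.mk_sum, map_sum]
    have term : ∀ i, ω (QuotientAddGroup.mk
        (Additive.ofMul g ⊗ₜ[ℤ] (((e h i : ℤ) : ℤ_[p]) • MonoidAlgebra.of ℤ_[p] G (g * b i)))) =
        e h i • (QuotientAddGroup.mk (Additive.ofMul g ⊗ₜ[ℤ] Additive.ofMul (b i)) :
          Htilde2 G) := by
      intro i
      rw [hω, map_intCast, inv_mul_cancel_left, ← natCast_zsmul]
      exact aux_smul_eq (p ^ k) (e h i) _ (htor g (b i))
    erw [map_sum ω]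
    simp only [term]
    have hsum : ∑ i, e h i • (QuotientAddGroup.mk
        (Additive.ofMul g ⊗ₜ[ℤ] Additive.ofMul (b i)) : Htilde2 G) =
        QuotientAddGroup.mk (Additive.ofMul g ⊗ₜ[ℤ]
          (∑ i, e h i • Additive.ofMul (b i) : Additive G)) := by
      rw [TensorProduct.tmul_sum, QuotientAddGroup.mk_sum]
      refine Finset.sum_congr rfl fun i _ => ?_
      rw [TensorProduct.tmul_smul]
      rfl
    erw [hsum]
    congr 1
    have : (∑ i, e h i • Additive.ofMul (b i) : Additive G) =
        Additive.ofMul (∏ i, b i ^ e h i) := rfl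
    rw [this, ← hdecomp h]
  have hmain : ∀ x : Htilde2 G, ω (ε x) = x := by
    intro x
    obtain ⟨y, rfl⟩ := QuotientAddGroup.mk_surjective x
    induction y using TensorProduct.induction_on with
    | zero => exact (congrArg ω (map_zero ε)).trans (map_zero ω)
    | tmul a c => exact key a.toMul c.toMul
    | add a c ha hc => rw [QuotientAddGroup.mk_add]; erw [map_add ε, map_add ω, ha, hc]; rfl
  exact ⟨AddMonoidHom.ext hmain, hmain⟩
end

section
/- Let p be a prime, n ≥ 1, s ≥ 2. Then the two finite abelian groups Z/p^{s-1} ⊗_Z (⊕_{g ∈ C_{p^n}} C_{p^n}/⟨g⟩) and Z/p^{s-1} ⊗_Z (⊕_{i=2}^{p^n} Z/i) are isomorphic. -/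
open TensorProduct DirectSum

lemma zsmul_one_zmod (m k : ℕ) : ((k : ℤ) • (1 : ZMod m)) = (k : ZMod m) := by
  simp

noncomputable def zmodTensorGcd (a b : ℕ) (ha0 : a ≠ 0) (hb0 : b ≠ 0) :
    (ZMod a ⊗[ℤ] ZMod b) ≃+ ZMod (Nat.gcd a b) := by
  haveI : NeZero a := ⟨ha0⟩
  haveI : NeZero b := ⟨hb0⟩
  haveI : NeZero (Nat.gcd a b) := ⟨Nat.gcd_ne_zero_left ha0⟩
  set g := Nat.gcd a b with hg
  let c1 : ZMod a →+* ZMod g := ZMod.castHom (Nat.gcd_dvd_left a b) (ZMod g)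
  let c2 : ZMod b →+* ZMod g := ZMod.castHom (Nat.gcd_dvd_right a b) (ZMod g)
  let bil : ZMod a →ₗ[ℤ] ZMod b →ₗ[ℤ] ZMod g :=
    LinearMap.mk₂ ℤ (fun x y => c1 x * c2 y)
      (fun x x' y => by simp [map_add, add_mul])
      (fun r x y => by simp only [zsmul_eq_mul]; push_cast [map_mul, map_intCast]; ring)
      (fun x y y' => by simp [map_add, mul_add])
      (fun r x y => by simp only [zsmul_eq_mul]; push_cast [map_mul, map_intCast]; ring)
  let f : ZMod a ⊗[ℤ] ZMod b →ₗ[ℤ] ZMod g := TensorProduct.lift bil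
  have ftmul : ∀ (x : ZMod a) (y : ZMod b), f (x ⊗ₜ[ℤ] y) = c1 x * c2 y := fun x y => rfl
  let t : ZMod a ⊗[ℤ] ZMod b := (1 : ZMod a) ⊗ₜ[ℤ] (1 : ZMod b)
  have h0 : (zmultiplesHom _ t) (g : ℤ) = 0 := by
    have hgcd : ((g : ℕ) : ℤ) = a * Nat.gcdA a b + b * Nat.gcdB a b := Nat.gcd_eq_gcd_ab a b
    have h1 : (a : ℤ) • t = 0 := by
      show (a : ℤ) • ((1 : ZMod a) ⊗ₜ[ℤ] (1 : ZMod b)) = 0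
      rw [TensorProduct.smul_tmul', zsmul_one_zmod, ZMod.natCast_self, TensorProduct.zero_tmul]
    have h2 : (b : ℤ) • t = 0 := by
      show (b : ℤ) • ((1 : ZMod a) ⊗ₜ[ℤ] (1 : ZMod b)) = 0
      rw [TensorProduct.smul_tmul', TensorProduct.smul_tmul, zsmul_one_zmod, ZMod.natCast_self,
        TensorProduct.tmul_zero]
    simp only [zmultiplesHom_apply, hgcd, add_smul, mul_comm (a : ℤ), mul_comm (b : ℤ), mul_smul,
      h1, h2, smul_zero, add_zero]
  let ψ : ZMod g →+ ZMod a ⊗[ℤ] ZMod b := ZMod.lift g ⟨zmultiplesHom _ t, h0⟩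
  have hψ : ∀ k : ℕ, ψ ((k : ℕ) : ZMod g) = (k : ℤ) • t := by
    intro k
    have : ((k : ℕ) : ZMod g) = (((k : ℕ) : ℤ) : ZMod g) := by push_cast; ring
    rw [this]
    show ZMod.lift g ⟨zmultiplesHom _ t, h0⟩ _ = _
    rw [ZMod.lift_coe]
    rfl
  refine AddEquiv.mk' ⟨fun x => f x, fun y => ψ y, ?_, ?_⟩ f.map_add
  · intro x
    show ψ (f x) = x
    induction x using TensorProduct.induction_on with
    | zero => simp
    | tmul x y =>
      have hx : x = (x.val : ZMod a) := (ZMod.natCast_rightInverse x).symm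
      have hy : y = (y.val : ZMod b) := (ZMod.natCast_rightInverse y).symm
      rw [hx, hy, ftmul]
      have hc : c1 ((x.val : ZMod a)) * c2 ((y.val : ZMod b)) = ((x.val * y.val : ℕ) : ZMod g) := by
        push_cast [map_natCast]; ring
      rw [hc, hψ]
      show _ = (x.val : ZMod a) ⊗ₜ[ℤ] (y.val : ZMod b)
      push_cast
      rw [mul_comm, mul_smul, TensorProduct.smul_tmul', ← TensorProduct.tmul_smul,
        zsmul_one_zmod, zsmul_one_zmod]
    | add x y hx hy => rw [map_add, map_add, hx, hy]
  · intro x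
    show f (ψ x) = x
    have hx : x = (x.val : ZMod g) := (ZMod.natCast_rightInverse x).symm
    rw [hx, hψ, map_zsmul, ftmul]
    rw [map_one, map_one, mul_one, zsmul_one_zmod]

noncomputable def zmodQuotGcd (m : ℕ) (hm : m ≠ 0) (g : ZMod m) :
    (ZMod m ⧸ AddSubgroup.zmultiples g) ≃+ ZMod (Nat.gcd g.val m) := by
  haveI : NeZero m := ⟨hm⟩
  haveI : IsAddCyclic (ZMod m ⧸ AddSubgroup.zmultiples g) :=
    isAddCyclic_of_surjective (QuotientAddGroup.mk' _) (QuotientAddGroup.mk'_surjective _)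
  refine (addEquivOfAddCyclicCardEq ?_).symm
  have hd : Nat.gcd m g.val ∣ m := Nat.gcd_dvd_left m g.val
  have hcard : Nat.card (AddSubgroup.zmultiples g) = m / Nat.gcd m g.val := by
    rw [Nat.card_zmultiples]
    conv_lhs => rw [← (ZMod.natCast_rightInverse g : ((g.val : ℕ) : ZMod m) = g)]
    exact ZMod.addOrderOf_coe g.val hm
  have hmul : Nat.card (AddSubgroup.zmultiples g) * (AddSubgroup.zmultiples g).index
      = Nat.card (ZMod m) := AddSubgroup.card_mul_index _
  rw [Nat.card_zmod, hcard] at hmul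
  have hpos : 0 < m / Nat.gcd m g.val :=
    Nat.div_pos (Nat.le_of_dvd (Nat.pos_of_ne_zero hm) hd) (Nat.pos_of_ne_zero (Nat.gcd_ne_zero_left hm))
  have hidx : (AddSubgroup.zmultiples g).index = Nat.gcd m g.val := by
    have h2 : m / Nat.gcd m g.val * Nat.gcd m g.val = m := Nat.div_mul_cancel hd
    exact Nat.eq_of_mul_eq_mul_left hpos (hmul.trans h2.symm)
  rw [Nat.card_zmod, ← AddSubgroup.index_eq_card, hidx, Nat.gcd_comm]

noncomputable def directSumCongr {ι : Type*} [DecidableEq ι] {M N : ι → Type*}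
    [∀ i, AddCommGroup (M i)] [∀ i, AddCommGroup (N i)] (e : ∀ i, M i ≃+ N i) :
    (⨁ i, M i) ≃+ ⨁ i, N i :=
  DFinsupp.mapRange.addEquiv e

noncomputable def directSumSumUnique {ι κ : Type*} [DecidableEq ι] [DecidableEq κ]
    (M : ι ⊕ κ → Type*) [∀ x, AddCommGroup (M x)] [∀ k, Subsingleton (M (Sum.inr k))] :
    (⨁ x, M x) ≃+ ⨁ i, M (Sum.inl i) := by
  let F : (⨁ x, M x) →+ ⨁ i, M (Sum.inl i) :=
    DirectSum.toAddMonoid (fun x => Sum.rec (fun i => DirectSum.of (fun i => M (Sum.inl i)) i)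
      (fun k => 0) x)
  let G : (⨁ i, M (Sum.inl i)) →+ ⨁ x, M x :=
    DirectSum.toAddMonoid (fun i => DirectSum.of M (Sum.inl i))
  refine AddEquiv.mk' ⟨fun x => F x, fun y => G y, ?_, ?_⟩ F.map_add
  · intro x
    show G (F x) = x
    induction x using DirectSum.induction_on with
    | zero => simp
    | of x m =>
      cases x with
      | inl i => rw [DirectSum.toAddMonoid_of]; exact DirectSum.toAddMonoid_of _ _ _
      | inr k =>
        have : m = 0 := Subsingleton.elim _ _
        rw [this]
        simp
    | add x y hx hy => rw [map_add, map_add, hx, hy]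
  · intro y
    show F (G y) = y
    induction y using DirectSum.induction_on with
    | zero => simp
    | of i m => rw [DirectSum.toAddMonoid_of]; exact DirectSum.toAddMonoid_of _ _ _
    | add x y hx hy => rw [map_add, map_add, hx, hy]

lemma gcd_pow_eq {p : ℕ} (hp : p.Prime) (α n x : ℕ) (hx0 : 0 < x) (hxm : x ≤ p ^ n) :
    Nat.gcd (p ^ α) (Nat.gcd x (p ^ n)) = Nat.gcd (p ^ α) x := by
  rw [← Nat.gcd_assoc]
  obtain ⟨k, hk, hdk⟩ := (Nat.dvd_prime_pow hp).mp (Nat.gcd_dvd_left (p ^ α) x)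
  refine Nat.gcd_eq_left ?_
  rw [hdk]
  have hdx : p ^ k ∣ x := hdk ▸ Nat.gcd_dvd_right (p ^ α) x
  have : p ^ k ≤ p ^ n := le_trans (Nat.le_of_dvd hx0 hdx) hxm
  exact pow_dvd_pow p ((Nat.pow_le_pow_iff_right hp.one_lt).mp this)

noncomputable def indexEquiv (m : ℕ) (hm : 2 ≤ m) :
    (Fin (m - 1) ⊕ Unit) ≃ ZMod m := by
  haveI : NeZero m := ⟨by omega⟩
  haveI : Fact (1 < m) := ⟨by omega⟩
  let f : Fin (m - 1) ⊕ Unit → ZMod m :=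
    fun x => Sum.rec (fun j => ((j.val + 2 : ℕ) : ZMod m)) (fun _ => 1) x
  have key : ∀ x y : ℕ, 2 ≤ x → x ≤ m → 2 ≤ y → y ≤ m → (x : ZMod m) = (y : ZMod m) → x = y := by
    intro x y hx2 hxm hy2 hym h
    rcases eq_or_lt_of_le hxm with hx | hx <;> rcases eq_or_lt_of_le hym with hy | hy
    · omega
    · exfalso
      rw [hx, ZMod.natCast_self] at h
      have := (ZMod.natCast_eq_zero_iff y m).mp h.symm
      have := Nat.le_of_dvd (by omega) this
      omega
    · exfalso
      rw [hy, ZMod.natCast_self] at h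
      have := (ZMod.natCast_eq_zero_iff x m).mp h
      have := Nat.le_of_dvd (by omega) this
      omega
    · have := congrArg ZMod.val h
      rwa [ZMod.val_cast_of_lt hx, ZMod.val_cast_of_lt hy] at this
  have hone : ∀ x : ℕ, 2 ≤ x → x ≤ m → (x : ZMod m) ≠ 1 := by
    intro x hx2 hxm h
    have h1 : ((1 : ℕ) : ZMod m) = 1 := by push_cast; rfl
    rcases eq_or_lt_of_le hxm with hx | hx
    · rw [hx, ZMod.natCast_self] at h
      exact one_ne_zero h.symm
    · rw [← h1] at h
      have := congrArg ZMod.val h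
      rw [ZMod.val_cast_of_lt hx, ZMod.val_cast_of_lt (by omega)] at this
      omega
  have hinj : Function.Injective f := by
    intro u v huv
    cases u with
    | inl j =>
      cases v with
      | inl j' =>
        have := key (j.val + 2) (j'.val + 2) (by omega) (by omega : j.val + 2 ≤ m)
          (by omega) (by omega : j'.val + 2 ≤ m) huv
        · exact congrArg Sum.inl (Fin.ext (by omega))
      | inr u => exact absurd huv (hone (j.val + 2) (by omega) (by omega : j.val + 2 ≤ m))
    | inr u =>
      cases v with
      | inl j' => exact absurd huv.symm (hone (j'.val + 2) (by omega) (by omega : j'.val + 2 ≤ m))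
      | inr u' => rfl
  refine Equiv.ofBijective f ((Fintype.bijective_iff_injective_and_card f).mpr ⟨hinj, ?_⟩)
  simp [ZMod.card]
  omega

def Dfun (a : ℕ) {k : ℕ} : Fin k ⊕ Unit → ℕ :=
  fun x => Sum.rec (fun j => Nat.gcd a (j.val + 2)) (fun _ => 1) x

def cfun (a m : ℕ) (g : ZMod m) : ℕ := Nat.gcd a (Nat.gcd g.val m)

noncomputable def zmodCongr {m1 m2 : ℕ} (h : m1 = m2) : ZMod m1 ≃+ ZMod m2 := by
  subst h; exact AddEquiv.refl _

/-- For a prime `p`, `n ≥ 1` and `s ≥ 2`, the finite abelian groups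
`ℤ/p^{s-1} ⊗_ℤ (⊕_{g ∈ C_{p^n}} C_{p^n}/⟨g⟩)` and `ℤ/p^{s-1} ⊗_ℤ (⊕_{i=2}^{p^n} ℤ/i)`
are isomorphic. -/
theorem stmt11 (p : ℕ) (hp : p.Prime) (n s : ℕ) (hn : 1 ≤ n) (hs : 2 ≤ s) :
    Nonempty
      ((ZMod (p ^ (s - 1)) ⊗[ℤ]
          ⨁ g : ZMod (p ^ n), ZMod (p ^ n) ⧸ AddSubgroup.zmultiples g) ≃+
        (ZMod (p ^ (s - 1)) ⊗[ℤ] ⨁ j : Fin (p ^ n - 1), ZMod (j.val + 2))) := by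
  have hp2 := hp.two_le
  set a := p ^ (s - 1) with hadef
  set m := p ^ n with hmdef
  have hm2 : 2 ≤ m := le_trans hp2 (Nat.le_self_pow (by omega) p)
  have hm0 : m ≠ 0 := by omega
  have ha0 : a ≠ 0 := pow_ne_zero _ (by omega)
  haveI : NeZero m := ⟨hm0⟩
  haveI : Fact (1 < m) := ⟨by omega⟩
  have E1 := (TensorProduct.directSumRight ℤ ℤ (ZMod a)
    (fun g : ZMod m => ZMod m ⧸ AddSubgroup.zmultiples g)).toAddEquiv
  have hgcdne : ∀ g : ZMod m, Nat.gcd g.val m ≠ 0 := fun g => Nat.gcd_ne_zero_right hm0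
  let E2 : ∀ g : ZMod m, (ZMod a ⊗[ℤ] (ZMod m ⧸ AddSubgroup.zmultiples g)) ≃+ ZMod (cfun a m g) :=
    fun g =>
      ((TensorProduct.congr (LinearEquiv.refl ℤ (ZMod a))
        (zmodQuotGcd m hm0 g).toIntLinearEquiv).toAddEquiv).trans
        (zmodTensorGcd a _ ha0 (hgcdne g))
  have E3 : (⨁ g : ZMod m, (ZMod a ⊗[ℤ] (ZMod m ⧸ AddSubgroup.zmultiples g)))
      ≃+ ⨁ g : ZMod m, ZMod (cfun a m g) := directSumCongr (M := fun g : ZMod m => ZMod a ⊗[ℤ] (ZMod m ⧸ AddSubgroup.zmultiples g)) (N := fun g : ZMod m => ZMod (cfun a m g)) E2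
  let e := indexEquiv m hm2
  have E4 : (⨁ g : ZMod m, ZMod (cfun a m g)) ≃+ ⨁ x : Fin (m - 1) ⊕ Unit, ZMod (cfun a m (e x)) :=
    DirectSum.equivCongrLeft e.symm
  have hD : ∀ x, cfun a m (e x) = Dfun a x := by
    intro x
    cases x with
    | inl j =>
      show Nat.gcd a (Nat.gcd (((j.val + 2 : ℕ) : ZMod m)).val m) = Nat.gcd a (j.val + 2)
      rw [ZMod.val_natCast]
      have h1 : Nat.gcd ((j.val + 2) % m) m = Nat.gcd (j.val + 2) m := by
        rw [← Nat.gcd_rec, Nat.gcd_comm]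
      rw [h1]
      have hj := j.isLt
      exact gcd_pow_eq hp (s - 1) n (j.val + 2) (by omega) (by omega)
    | inr u =>
      show Nat.gcd a (Nat.gcd (1 : ZMod m).val m) = 1
      rw [ZMod.val_one]
      simp
  have E5 : (⨁ x : Fin (m - 1) ⊕ Unit, ZMod (cfun a m (e x)))
      ≃+ ⨁ x : Fin (m - 1) ⊕ Unit, ZMod (Dfun a x) :=
    directSumCongr (M := fun x => ZMod (cfun a m (e x))) (N := fun x => ZMod (Dfun a x)) (fun x => zmodCongr (hD x))
  have hsub : ∀ k : Unit, Subsingleton ((fun x : Fin (m - 1) ⊕ Unit => ZMod (Dfun a x)) (Sum.inr k)) := fun k =>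
    inferInstanceAs (Subsingleton (ZMod 1))
  have E6 : (⨁ x : Fin (m - 1) ⊕ Unit, ZMod (Dfun a x))
      ≃+ ⨁ j : Fin (m - 1), ZMod (Dfun a (Sum.inl j)) :=
    @directSumSumUnique (Fin (m - 1)) Unit _ _ (fun x => ZMod (Dfun a x)) _ hsub
  have F1 := (TensorProduct.directSumRight ℤ ℤ (ZMod a)
    (fun j : Fin (m - 1) => ZMod (j.val + 2))).toAddEquiv
  have F2 : (⨁ j : Fin (m - 1), ZMod a ⊗[ℤ] ZMod (j.val + 2))
      ≃+ ⨁ j : Fin (m - 1), ZMod (Dfun a (Sum.inl j)) :=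
    directSumCongr (M := fun j : Fin (m-1) => ZMod a ⊗[ℤ] ZMod (j.val + 2)) (N := fun j : Fin (m-1) => ZMod (Dfun a (Sum.inl j))) (fun j => zmodTensorGcd a (j.val + 2) ha0 (by omega))
  exact ⟨((E1.trans (E3.trans (E4.trans (E5.trans E6))))).trans (F1.trans F2).symm⟩
end
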